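/- Under the original charging scheme, at every time each page bears at most one charge from itself and at most one charge from a page other than itself; in particular, no page ever bears more than two charges. -/

import Mathlib

open Finset
open scoped Classical

/-! ## The original Lund–Phillips–Reingold charging scheme

We fix an infinite request sequence and fixed runs of an online paging policy `A`
and of an online policy `OPT` on it, both from the same initial cache of size `k`.
Each page `p` carries a value `chg p ∈ Option Page` (`none` = no charge given);
`p` gives a charge to the page `chg p` when `chg p ≠ none`, and that page bears it.
When a page `s` is requested at time `t` the charges are updated in order:
(1) `c(s) := none`;
(2) if `A` misses and evicts `p`: if `p` is not in `OPT`'s cache just after the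
request then `c(p) := p`, otherwise `c(p) := q` for a page `q` of `A`'s cache just
before the request, outside `OPT`'s cache just after it, bearing no charge from any
page of `OPT⁺ \ A⁻`;
(3) if `OPT` evicts `p` then `c(p) := p`. -/

/-- One step of a paging run: on a hit nothing happens, on a miss some cached page `p`
is evicted and the requested page brought in. -/
def CacheStep {Page : Type} [DecidableEq Page] (s : Page) (C C' : Finset Page)
    (ev : Option Page) : Prop :=
  (s ∈ C ∧ ev = none ∧ C' = C) ∨
    (s ∉ C ∧ ∃ p ∈ C, ev = some p ∧ C' = insert s (C.erase p))

/-- Step (1) of the original scheme: when `s` is requested, clear the charge that `s`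
gives. -/
def clearStepOrig {Page : Type} [DecidableEq Page] (s : Page)
    (c : Page → Option Page) : Page → Option Page :=
  fun x => if x = s then none else c x

/-- Step (2): if `A` evicted `p` (cache `CA` just before the request, `OPT`'s cache
`CO` just after it), assign `p`'s charge. -/
def AStep {Page : Type} [DecidableEq Page] (CA CO : Finset Page) (ev : Option Page)
    (c c' : Page → Option Page) : Prop :=
  match ev with
  | none => c' = c
  | some p =>
      (p ∉ CO ∧ c' = Function.update c p (some p)) ∨
        (p ∈ CO ∧ ∃ q ∈ CA, q ∉ CO ∧
          (∀ x ∈ CO, x ∉ CA → c x ≠ some q) ∧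
          c' = Function.update c p (some q))

/-- Step (3): if `OPT` evicted `p`, set `c(p) := p`. -/
def optStep {Page : Type} [DecidableEq Page] (ev : Option Page)
    (c : Page → Option Page) : Page → Option Page :=
  match ev with
  | none => c
  | some p => Function.update c p (some p)

/-- A joint run of the request sequence, of the two paging algorithms `A` and `OPT`
(started from the same initial cache of size `k`), and of the original charging scheme.
`req t` is the page requested at time `t`; `cacheA t`, `cacheOpt t` and `chg t` are the
caches and the charge function just before that request; `evA t`, `evOpt t` are the
pages evicted at time `t` (if any). -/
structure OrigChargingRun (Page : Type) [DecidableEq Page] where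
  k : ℕ
  req : ℕ → Page
  cacheA : ℕ → Finset Page
  cacheOpt : ℕ → Finset Page
  evA : ℕ → Option Page
  evOpt : ℕ → Option Page
  chg : ℕ → Page → Option Page
  init_card : (cacheA 0).card = k
  init_eq : cacheOpt 0 = cacheA 0
  chg_init : ∀ p, chg 0 p = none
  stepA : ∀ t, CacheStep (req t) (cacheA t) (cacheA (t + 1)) (evA t)
  stepOpt : ∀ t, CacheStep (req t) (cacheOpt t) (cacheOpt (t + 1)) (evOpt t)
  chg_step : ∀ t, ∃ c₂, AStep (cacheA t) (cacheOpt (t + 1)) (evA t)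
      (clearStepOrig (req t) (chg t)) c₂ ∧ chg (t + 1) = optStep (evOpt t) c₂

variable {Page : Type} [DecidableEq Page] [Fintype Page]

/-- The key invariant: any external charger lies in `OPT`'s cache but not `A`'s,
and each page has at most one external charger. -/
lemma orig_invariant (R : OrigChargingRun Page) (t : ℕ) :
    (∀ x q : Page, x ≠ q → R.chg t x = some q →
      x ∈ R.cacheOpt t ∧ x ∉ R.cacheA t) ∧
    (∀ q x y : Page, x ≠ q → y ≠ q → R.chg t x = some q → R.chg t y = some q →
      x = y) := by
  induction t with
  | zero =>
    constructor
    · intro x q _ h; rw [R.chg_init] at h; exact absurd h (by simp)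
    · intro q x y _ _ h _; rw [R.chg_init] at h; exact absurd h (by simp)
  | succ t ih =>
    obtain ⟨c₂, hA, hopt⟩ := R.chg_step t
    set s := R.req t with hs
    set c₁ := clearStepOrig (R.req t) (R.chg t) with hc₁
    -- characterization of external charges at time t+1
    have key : ∀ x q : Page, x ≠ q → R.chg (t + 1) x = some q →
        (x ≠ s ∧ R.chg t x = some q ∧ R.evOpt t ≠ some x ∧ R.evA t ≠ some x) ∨
        (R.evA t = some x ∧ x ∈ R.cacheOpt (t + 1) ∧ q ∈ R.cacheA t ∧
          q ∉ R.cacheOpt (t + 1) ∧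
          (∀ y ∈ R.cacheOpt (t + 1), y ∉ R.cacheA t → c₁ y ≠ some q) ∧
          R.evOpt t ≠ some x) := by
      intro x q hxq h
      rw [hopt] at h
      -- peel off optStep
      have hEO : R.evOpt t ≠ some x ∧ c₂ x = some q := by
        cases hEO : R.evOpt t with
        | none => simpa [optStep, hEO] using h
        | some p' =>
          rw [hEO] at h
          by_cases hxp : x = p'
          · subst hxp
            simp only [optStep, Function.update_self] at h
            exact absurd (Option.some.inj h) hxq
          · simp only [optStep, Function.update_of_ne hxp] at h
            exact ⟨fun hh => hxp (Option.some.inj hh).symm, h⟩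
      obtain ⟨hEOx, h⟩ := hEO
      -- peel off AStep
      unfold AStep at hA
      cases hEA : R.evA t with
      | none =>
        rw [hEA] at hA; rw [hA] at h
        rw [hc₁] at h; unfold clearStepOrig at h
        by_cases hxs : x = s
        · simp [hxs, hs] at h
        · left
          refine ⟨hxs, ?_, hEOx, by simp [hEA]⟩
          simpa [hs, hxs, show ¬x = R.req t from hxs] using h
      | some p =>
        rw [hEA] at hA
        rcases hA with ⟨hpCO, hc₂⟩ | ⟨hpCO, q₀, hq₀CA, hq₀CO, hcond, hc₂⟩
        · rw [hc₂] at h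
          by_cases hxp : x = p
          · subst hxp
            rw [Function.update_self] at h
            exact absurd (Option.some.inj h) hxq
          · rw [Function.update_of_ne hxp] at h
            rw [hc₁] at h; unfold clearStepOrig at h
            by_cases hxs : x = s
            · simp [hxs, hs] at h
            · left
              refine ⟨hxs, ?_, hEOx, fun hh => hxp (Option.some.inj hh).symm⟩
              simpa [hs, hxs, show ¬x = R.req t from hxs] using h
        · rw [hc₂] at h
          by_cases hxp : x = p
          · subst hxp
            rw [Function.update_self] at h
            have hq : q = q₀ := (Option.some.inj h).symm
            subst hq
            exact Or.inr ⟨rfl, hpCO, hq₀CA, hq₀CO, hcond, hEOx⟩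
          · rw [Function.update_of_ne hxp] at h
            rw [hc₁] at h; unfold clearStepOrig at h
            by_cases hxs : x = s
            · simp [hxs, hs] at h
            · left
              refine ⟨hxs, ?_, hEOx, fun hh => hxp (Option.some.inj hh).symm⟩
              simpa [hs, hxs, show ¬x = R.req t from hxs] using h
    -- old chargers remain in CO(t+1) \ CA(t)
    have old_mem : ∀ x q : Page, x ≠ q → x ≠ s → R.chg t x = some q →
        R.evOpt t ≠ some x → x ∈ R.cacheOpt (t + 1) ∧ x ∉ R.cacheA t := by
      intro x q hxq hxs hchg hEOx
      obtain ⟨hCO, hCA⟩ := ih.1 x q hxq hchg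
      refine ⟨?_, hCA⟩
      rcases R.stepOpt t with ⟨_, _, hC'⟩ | ⟨_, p', hp', hev, hC'⟩
      · rw [hC']; exact hCO
      · rw [hC']
        refine mem_insert_of_mem (mem_erase.2 ⟨?_, hCO⟩)
        intro hxe; exact hEOx (by rw [hxe, hev])
    constructor
    · -- membership invariant at t+1
      intro x q hxq h
      rcases key x q hxq h with ⟨hxs, hchg, hEOx, hEAx⟩ | ⟨hEAx, hxCO, _, _, _, _⟩
      · obtain ⟨hCO', hCA⟩ := old_mem x q hxq hxs hchg hEOx
        refine ⟨hCO', ?_⟩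
        rcases R.stepA t with ⟨_, _, hC'⟩ | ⟨hsC, pA, hpA, hev, hC'⟩
        · rw [hC']; exact hCA
        · rw [hC']
          intro hmem
          rcases mem_insert.1 hmem with h1 | h1
          · exact hxs (by rw [h1, hs])
          · exact hCA (mem_of_mem_erase h1)
      · refine ⟨hxCO, ?_⟩
        rcases R.stepA t with ⟨_, hev, _⟩ | ⟨hsC, pA, hpA, hev, hC'⟩
        · rw [hev] at hEAx; exact absurd hEAx (by simp)
        · rw [hev] at hEAx
          have hpx : pA = x := Option.some.inj hEAx
          subst hpx
          rw [hC']
          intro hmem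
          rcases mem_insert.1 hmem with h1 | h1
          · exact hsC (h1 ▸ hpA)
          · exact (mem_erase.1 h1).1 rfl
    · -- uniqueness at t+1
      intro q x y hx hy hcx hcy
      rcases key x q hx hcx with ⟨hxs, hchgx, hEOx, _⟩ | ⟨hEAx, _, _, _, hcondx, _⟩ <;>
        rcases key y q hy hcy with ⟨hys, hchgy, hEOy, _⟩ | ⟨hEAy, _, _, _, hcondy, _⟩
      · exact ih.2 q x y hx hy hchgx hchgy
      · -- x old, y new : contradiction with the condition
        obtain ⟨hCO', hCA⟩ := old_mem x q hx hxs hchgx hEOx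
        exact absurd (show c₁ x = some q by
          rw [hc₁]; unfold clearStepOrig; simp [hxs, hs, hchgx, show ¬x = R.req t from hxs])
          (hcondy x hCO' hCA)
      · obtain ⟨hCO', hCA⟩ := old_mem y q hy hys hchgy hEOy
        exact absurd (show c₁ y = some q by
          rw [hc₁]; unfold clearStepOrig; simp [hys, hs, hchgy, show ¬y = R.req t from hys])
          (hcondx y hCO' hCA)
      · exact Option.some.inj (hEAx ▸ hEAy : (some x : Option Page) = some y)

/-- **Claim (at most two charges).**  Under the original charging scheme, at every time
each page bears at most one charge from itself, at most one charge from a page other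
than itself; in particular, no page ever bears more than two charges. -/
theorem at_most_two_charges (R : OrigChargingRun Page) (t : ℕ) (p : Page) :
    (univ.filter fun x => x = p ∧ R.chg t x = some p).card ≤ 1 ∧
      (univ.filter fun x => x ≠ p ∧ R.chg t x = some p).card ≤ 1 ∧
      (univ.filter fun x => R.chg t x = some p).card ≤ 2 := by
  have h1 : (univ.filter fun x => x = p ∧ R.chg t x = some p).card ≤ 1 := by
    apply Finset.card_le_one.2
    intro a ha b hb
    rw [mem_filter] at ha hb
    rw [ha.2.1, hb.2.1]
  have h2 : (univ.filter fun x => x ≠ p ∧ R.chg t x = some p).card ≤ 1 := by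
    apply Finset.card_le_one.2
    intro a ha b hb
    rw [mem_filter] at ha hb
    exact (orig_invariant R t).2 p a b ha.2.1 hb.2.1 ha.2.2 hb.2.2
  refine ⟨h1, h2, ?_⟩
  have hsub : (univ.filter fun x => R.chg t x = some p) ⊆
      (univ.filter fun x => x = p ∧ R.chg t x = some p) ∪
        (univ.filter fun x => x ≠ p ∧ R.chg t x = some p) := by
    intro x hx
    rw [mem_filter] at hx
    by_cases hxp : x = p
    · exact mem_union_left _ (mem_filter.2 ⟨hx.1, hxp, hx.2⟩)
    · exact mem_union_right _ (mem_filter.2 ⟨hx.1, hxp, hx.2⟩)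
  calc (univ.filter fun x => R.chg t x = some p).card
      ≤ _ := Finset.card_le_card hsub
    _ ≤ _ + _ := Finset.card_union_le _ _
    _ ≤ 2 := by omega
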